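/- arXiv:2502.15415 — 5 statements merged into one kernel-verified Lean document; each statement's English description precedes it below -/
import Mathlib

section
/- Let k ≥ 1, let P, Q, R, S be Hermitian positive definite k×k complex matrices that commute pairwise, and let φ, ψ, η, ξ, a, b > 0 be real numbers. Then the generalized beta-logarithmic matrix function is symmetric in the sense that BL_{(φ,ψ)}^{(R,S,η,ξ)}(a,b;P,Q) = BL_{(φ,ψ)}^{(S,R,ξ,η)}(b,a;Q,P). -/
open MeasureTheory Real
open scoped Matrix.Norms.L2Operator ComplexOrder

noncomputable section

/-- For a real `t > 0` and a square complex matrix `A`, `t ^ A := exp (A · log t)`. -/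
def mpow {k : ℕ} (t : ℝ) (A : Matrix (Fin k) (Fin k) ℂ) : Matrix (Fin k) (Fin k) ℂ :=
  NormedSpace.exp ((Real.log t : ℂ) • A)

/-- The two-parameter matrix Mittag-Leffler function `E_{φ,ψ}(A) = ∑ Aⁿ / Γ(φn + ψ)`. -/
def mittagLeffler {k : ℕ} (φ ψ : ℝ) (A : Matrix (Fin k) (Fin k) ℂ) :
    Matrix (Fin k) (Fin k) ℂ :=
  ∑' n : ℕ, (Real.Gamma (φ * n + ψ))⁻¹ • A ^ n

/-- The integrand of the generalized beta-logarithmic matrix function: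
`a^{1-x} b^x · x^{P-I} (1-x)^{Q-I} E_{φ,ψ}(−R x^{−η}) E_{φ,ψ}(−S (1−x)^{−ξ})`. -/
def gblKernel {k : ℕ} (φ ψ η ξ : ℝ) (R S : Matrix (Fin k) (Fin k) ℂ) (a b : ℝ)
    (P Q : Matrix (Fin k) (Fin k) ℂ) (x : ℝ) : Matrix (Fin k) (Fin k) ℂ :=
  (a ^ (1 - x) * b ^ x : ℝ) •
    (mpow x (P - 1) * mpow (1 - x) (Q - 1) *
      mittagLeffler φ ψ ((-(x ^ (-η)) : ℝ) • R) *
      mittagLeffler φ ψ ((-((1 - x) ^ (-ξ)) : ℝ) • S))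

/-- The generalized beta-logarithmic matrix function `BL_{(φ,ψ)}^{(R,S,η,ξ)}(a,b;P,Q)`. -/
def GBL {k : ℕ} (φ ψ η ξ : ℝ) (R S : Matrix (Fin k) (Fin k) ℂ) (a b : ℝ)
    (P Q : Matrix (Fin k) (Fin k) ℂ) : Matrix (Fin k) (Fin k) ℂ :=
  ∫ x in Set.Ioo (0 : ℝ) 1, gblKernel φ ψ η ξ R S a b P Q x

/-- The generalized beta matrix function `B_{(φ,ψ)}^{(R,S,η,ξ)}(P,Q) = BL(1,1;P,Q)`. -/
def GB {k : ℕ} (φ ψ η ξ : ℝ) (R S : Matrix (Fin k) (Fin k) ℂ)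
    (P Q : Matrix (Fin k) (Fin k) ℂ) : Matrix (Fin k) (Fin k) ℂ :=
  GBL φ ψ η ξ R S 1 1 P Q


section Aux

variable {k : ℕ} {A B : Matrix (Fin k) (Fin k) ℂ}

lemma commute_mpow_right (h : Commute A B) (t : ℝ) : Commute A (mpow t B) :=
  (h.smul_right _).exp_right

lemma commute_ml_right (h : Commute A B) (φ ψ : ℝ) :
    Commute A (mittagLeffler φ ψ B) :=
  Commute.tsum_right _ fun n => (h.pow_right n).smul_right _

lemma commute_mpow_mpow (h : Commute A B) (t s : ℝ) : Commute (mpow t A) (mpow s B) :=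
  ((commute_mpow_right h.symm t).symm.smul_right _).exp_right

lemma commute_ml_ml (h : Commute A B) (φ ψ φ' ψ' : ℝ) :
    Commute (mittagLeffler φ ψ A) (mittagLeffler φ' ψ' B) :=
  commute_ml_right (commute_ml_right h.symm φ ψ).symm φ' ψ'

end Aux

theorem GBL_symm {k : ℕ} (hk : 1 ≤ k) (P Q R S : Matrix (Fin k) (Fin k) ℂ)
    (hP : P.PosDef) (hQ : Q.PosDef) (hR : R.PosDef) (hS : S.PosDef)
    (hPQ : Commute P Q) (hPR : Commute P R) (hPS : Commute P S)
    (hQR : Commute Q R) (hQS : Commute Q S) (hRS : Commute R S)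
    (φ ψ η ξ a b : ℝ) (hφ : 0 < φ) (hψ : 0 < ψ) (hη : 0 < η) (hξ : 0 < ξ)
    (ha : 0 < a) (hb : 0 < b)
    (hInt : IntegrableOn (gblKernel φ ψ η ξ R S a b P Q) (Set.Ioo 0 1))
    (hInt' : IntegrableOn (gblKernel φ ψ ξ η S R b a Q P) (Set.Ioo 0 1)) :
    GBL φ ψ η ξ R S a b P Q = GBL φ ψ ξ η S R b a Q P := by
  have hkernel : ∀ x : ℝ, gblKernel φ ψ η ξ R S a b P Q x
      = gblKernel φ ψ ξ η S R b a Q P (1 - x) := by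
    intro x
    unfold gblKernel
    rw [sub_sub_cancel]
    have h1 : Commute (mpow x (P - 1)) (mpow (1 - x) (Q - 1)) :=
      commute_mpow_mpow ((hPQ.sub_left (Commute.one_left Q)).sub_right (Commute.one_right _)) _ _
    have h2 : Commute (mittagLeffler φ ψ ((-(x ^ (-η)) : ℝ) • R))
        (mittagLeffler φ ψ ((-((1 - x) ^ (-ξ)) : ℝ) • S)) :=
      commute_ml_ml ((hRS.smul_left _).smul_right _) _ _ _ _
    rw [mul_comm (a ^ (1 - x)) (b ^ x), ← h1.eq, mul_assoc, h2.eq, ← mul_assoc]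
  have hfun : (fun x => gblKernel φ ψ η ξ R S a b P Q x)
      = fun x => gblKernel φ ψ ξ η S R b a Q P (1 - x) := funext hkernel
  unfold GBL
  rw [hfun]
  have hmp : MeasurePreserving (fun x : ℝ => 1 - x) volume volume :=
    Measure.measurePreserving_sub_left volume 1
  have hemb : MeasurableEmbedding (fun x : ℝ => 1 - x) :=
    (MeasurableEquiv.subLeft (1 : ℝ)).measurableEmbedding
  have hpre : (fun x : ℝ => 1 - x) ⁻¹' Set.Ioo (0 : ℝ) 1 = Set.Ioo (0 : ℝ) 1 := by
    ext x
    simp only [Set.mem_preimage, Set.mem_Ioo]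
    constructor <;> rintro ⟨h1, h2⟩ <;> constructor <;> linarith
  conv_lhs => rw [← hpre]
  exact hmp.setIntegral_preimage_emb hemb _ _


end
end

section
/- Let k ≥ 1, let P, Q, R, S be Hermitian positive definite k×k complex matrices, and let φ, ψ, η, ξ, a, b > 0 be real numbers. Then the generalized beta-logarithmic matrix function satisfies the recurrence BL_{(φ,ψ)}^{(R,S,η,ξ)}(a,b;P+I,Q) + BL_{(φ,ψ)}^{(R,S,η,ξ)}(a,b;P,Q+I) = BL_{(φ,ψ)}^{(R,S,η,ξ)}(a,b;P,Q). -/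
open MeasureTheory Real
open scoped Matrix.Norms.L2Operator ComplexOrder

noncomputable section

lemma mpow_add_one' {k : ℕ} {t : ℝ} (ht : 0 < t) (A : Matrix (Fin k) (Fin k) ℂ) :
    mpow t (A + 1) = (t : ℂ) • mpow t A := by
  have hc : Commute ((Real.log t : ℂ) • A) ((Real.log t : ℂ) • (1 : Matrix (Fin k) (Fin k) ℂ)) :=
    ((Commute.one_right A).smul_left _).smul_right _
  have h1 : ((Real.log t : ℂ) • (1 : Matrix (Fin k) (Fin k) ℂ)) =
      algebraMap ℂ (Matrix (Fin k) (Fin k) ℂ) (Real.log t : ℂ) :=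
    (Algebra.algebraMap_eq_smul_one _).symm
  calc mpow t (A + 1) = NormedSpace.exp ((Real.log t : ℂ) • A + (Real.log t : ℂ) • 1) := by
        rw [mpow, smul_add]
    _ = NormedSpace.exp ((Real.log t : ℂ) • A) *
        NormedSpace.exp ((Real.log t : ℂ) • (1 : Matrix (Fin k) (Fin k) ℂ)) :=
        Matrix.exp_add_of_commute _ _ hc
    _ = (t : ℂ) • mpow t A := by
        rw [h1, ← NormedSpace.algebraMap_exp_comm, ← Complex.exp_eq_exp_ℂ,
          ← Complex.ofReal_exp, Real.exp_log ht, Algebra.algebraMap_eq_smul_one,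
          mul_smul_comm, mul_one, mpow]

lemma gblKernel_left_add_one {k : ℕ} (φ ψ η ξ : ℝ) (R S : Matrix (Fin k) (Fin k) ℂ) (a b : ℝ)
    (P Q : Matrix (Fin k) (Fin k) ℂ) {x : ℝ} (hx : 0 < x) :
    gblKernel φ ψ η ξ R S a b (P + 1) Q x = (x : ℂ) • gblKernel φ ψ η ξ R S a b P Q x := by
  have h : mpow x (P + 1 - 1) = (x : ℂ) • mpow x (P - 1) := by
    rw [add_sub_cancel_right, ← mpow_add_one' hx, sub_add_cancel]
  simp only [gblKernel, h, smul_mul_assoc]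
  rw [smul_comm]

lemma gblKernel_right_add_one {k : ℕ} (φ ψ η ξ : ℝ) (R S : Matrix (Fin k) (Fin k) ℂ) (a b : ℝ)
    (P Q : Matrix (Fin k) (Fin k) ℂ) {x : ℝ} (hx : x < 1) :
    gblKernel φ ψ η ξ R S a b P (Q + 1) x =
      ((1 - x : ℝ) : ℂ) • gblKernel φ ψ η ξ R S a b P Q x := by
  have h : mpow (1 - x) (Q + 1 - 1) = ((1 - x : ℝ) : ℂ) • mpow (1 - x) (Q - 1) := by
    rw [add_sub_cancel_right, ← mpow_add_one' (show (0:ℝ) < 1 - x by linarith) (Q - 1), sub_add_cancel]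
  simp only [gblKernel, h, mul_smul_comm, smul_mul_assoc]
  rw [smul_comm]

theorem GBL_recurrence {k : ℕ} (hk : 1 ≤ k) (P Q R S : Matrix (Fin k) (Fin k) ℂ)
    (hP : P.PosDef) (hQ : Q.PosDef) (hR : R.PosDef) (hS : S.PosDef)
    (φ ψ η ξ a b : ℝ) (hφ : 0 < φ) (hψ : 0 < ψ) (hη : 0 < η) (hξ : 0 < ξ)
    (ha : 0 < a) (hb : 0 < b)
    (hInt : ∀ m n : ℕ, IntegrableOn
      (gblKernel φ ψ η ξ R S a b (P + m • (1 : Matrix (Fin k) (Fin k) ℂ))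
        (Q + n • (1 : Matrix (Fin k) (Fin k) ℂ))) (Set.Ioo 0 1)) :
    GBL φ ψ η ξ R S a b (P + 1) Q + GBL φ ψ η ξ R S a b P (Q + 1) =
      GBL φ ψ η ξ R S a b P Q := by
  have h10 := hInt 1 0
  have h01 := hInt 0 1
  simp only [one_smul, zero_smul, add_zero] at h10 h01
  unfold GBL
  rw [← integral_add h10 h01]
  refine setIntegral_congr_fun measurableSet_Ioo ?_
  intro x hx
  dsimp only
  rw [gblKernel_left_add_one φ ψ η ξ R S a b P Q hx.1,
    gblKernel_right_add_one φ ψ η ξ R S a b P Q hx.2, ← add_smul]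
  norm_num
end
end

section
/- Let k ≥ 1, let P, Q, R, S be Hermitian positive definite k×k complex matrices, and let φ, ψ, η, ξ, a, b > 0 be real numbers. Then the generalized beta-logarithmic matrix function admits the infinite-sum representation BL_{(φ,ψ)}^{(R,S,η,ξ)}(a,b;P,Q) = ∑_{n=0}^∞ BL_{(φ,ψ)}^{(R,S,η,ξ)}(a,b;P+nI,Q+I), the series converging in the space of k×k complex matrices. -/
open MeasureTheory Real
open scoped Matrix.Norms.L2Operator ComplexOrder

noncomputable section

open scoped ENNReal NNReal

lemma exp_smul_one {k : ℕ} (c : ℂ) :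
    NormedSpace.exp (c • (1 : Matrix (Fin k) (Fin k) ℂ)) = Complex.exp c • 1 := by
  rw [← Algebra.algebraMap_eq_smul_one, ← NormedSpace.algebraMap_exp_comm,
    Algebra.algebraMap_eq_smul_one, Complex.exp_eq_exp_ℂ]

lemma mpow_add_smul_one {k : ℕ} (t : ℝ) (A : Matrix (Fin k) (Fin k) ℂ) (c : ℂ) :
    mpow t (A + c • 1) = Complex.exp ((Real.log t : ℂ) * c) • mpow t A := by
  have hcomm : Commute ((Real.log t : ℂ) • A)
      (((Real.log t : ℂ) * c) • (1 : Matrix (Fin k) (Fin k) ℂ)) :=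
    ((Commute.one_right A).smul_right _).smul_left _
  rw [mpow, smul_add, smul_smul, Matrix.exp_add_of_commute _ _ hcomm, exp_smul_one, mpow]
  rw [mul_comm]
  simp [Matrix.mul_smul]

lemma exp_log_nat (x : ℝ) (hx : 0 < x) (n : ℕ) :
    Complex.exp ((Real.log x : ℂ) * n) = ((x : ℂ)) ^ n := by
  rw [mul_comm, Complex.exp_nat_mul, ← Complex.ofReal_exp, Real.exp_log hx]

lemma kernel_shift {k : ℕ} (φ ψ η ξ : ℝ) (R S : Matrix (Fin k) (Fin k) ℂ) (a b : ℝ)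
    (P Q : Matrix (Fin k) (Fin k) ℂ) (n : ℕ) {x : ℝ} (hx : x ∈ Set.Ioo (0:ℝ) 1) :
    gblKernel φ ψ η ξ R S a b (P + n • (1 : Matrix (Fin k) (Fin k) ℂ)) (Q + 1) x
      = (x ^ n * (1 - x)) • gblKernel φ ψ η ξ R S a b P Q x := by
  obtain ⟨hx0, hx1⟩ := hx
  have h1 : P + n • (1 : Matrix (Fin k) (Fin k) ℂ) - 1 = (P - 1) + (n : ℂ) • 1 := by
    rw [Nat.cast_smul_eq_nsmul]; abel
  have h2 : mpow x (P + n • (1 : Matrix (Fin k) (Fin k) ℂ) - 1)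
      = ((x:ℂ)^n) • mpow x (P - 1) := by
    rw [h1, mpow_add_smul_one, exp_log_nat x hx0]
  have h3 : Q + 1 - 1 = (Q - 1) + (1 : ℂ) • 1 := by rw [one_smul]; abel
  have h4 : mpow (1 - x) (Q + 1 - 1) = ((1 - x : ℝ) : ℂ) • mpow (1 - x) (Q - 1) := by
    rw [h3, mpow_add_smul_one, mul_one, ← Complex.ofReal_exp, Real.exp_log (by linarith)]
  simp only [gblKernel, h2, h4, Matrix.smul_mul, Matrix.mul_smul, smul_smul,
    ← Complex.coe_smul]
  congr 1
  push_cast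
  ring

theorem GBL_infinite_sum_left {k : ℕ} (hk : 1 ≤ k) (P Q R S : Matrix (Fin k) (Fin k) ℂ)
    (hP : P.PosDef) (hQ : Q.PosDef) (hR : R.PosDef) (hS : S.PosDef)
    (φ ψ η ξ a b : ℝ) (hφ : 0 < φ) (hψ : 0 < ψ) (hη : 0 < η) (hξ : 0 < ξ)
    (ha : 0 < a) (hb : 0 < b)
    (hInt : ∀ m n : ℕ, IntegrableOn
      (gblKernel φ ψ η ξ R S a b (P + m • (1 : Matrix (Fin k) (Fin k) ℂ))
        (Q + n • (1 : Matrix (Fin k) (Fin k) ℂ))) (Set.Ioo 0 1)) :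
    GBL φ ψ η ξ R S a b P Q =
      ∑' n : ℕ, GBL φ ψ η ξ R S a b (P + n • (1 : Matrix (Fin k) (Fin k) ℂ)) (Q + 1) := by
  set μ := (volume : Measure ℝ).restrict (Set.Ioo (0:ℝ) 1) with hμ
  set g : ℝ → Matrix (Fin k) (Fin k) ℂ := gblKernel φ ψ η ξ R S a b P Q with hgdef
  set f : ℕ → ℝ → Matrix (Fin k) (Fin k) ℂ :=
    fun n => gblKernel φ ψ η ξ R S a b (P + n • (1 : Matrix (Fin k) (Fin k) ℂ)) (Q + 1)
    with hfdef
  have hg : Integrable g μ := by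
    have := hInt 0 0
    simpa [hgdef, IntegrableOn] using this
  have hf : ∀ n, Integrable (f n) μ := by
    intro n
    have := hInt n 1
    simpa [hfdef, IntegrableOn] using this
  -- pointwise identity on Ioo
  have hpt : ∀ x ∈ Set.Ioo (0:ℝ) 1, ∑' n : ℕ, f n x = g x := by
    intro x hx
    have hsum : Summable (fun n : ℕ => x ^ n * (1 - x)) :=
      (summable_geometric_of_lt_one hx.1.le hx.2).mul_right _
    calc ∑' n : ℕ, f n x = ∑' n : ℕ, (x ^ n * (1 - x)) • g x := by
          exact tsum_congr fun n => kernel_shift φ ψ η ξ R S a b P Q n hx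
      _ = (∑' n : ℕ, x ^ n * (1 - x)) • g x := hsum.tsum_smul_const _
      _ = g x := by
          rw [tsum_mul_right, tsum_geometric_of_lt_one hx.1.le hx.2,
            inv_mul_cancel₀ (by linarith [hx.2] : (1:ℝ) - x ≠ 0), one_smul]
  -- finiteness of the sum of lintegrals
  have hmeas : ∀ n, AEStronglyMeasurable (f n) μ := fun n => (hf n).1
  have hfin : ∑' n : ℕ, ∫⁻ x, ‖f n x‖₊ ∂μ ≠ ⊤ := by
    have hswap : ∑' n : ℕ, ∫⁻ x, ‖f n x‖₊ ∂μ = ∫⁻ x, ∑' n : ℕ, (‖f n x‖₊ : ℝ≥0∞) ∂μ :=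
      (lintegral_tsum fun n => (hmeas n).enorm).symm
    have hptl : ∀ x ∈ Set.Ioo (0:ℝ) 1,
        ∑' n : ℕ, (‖f n x‖₊ : ℝ≥0∞) = (‖g x‖₊ : ℝ≥0∞) := by
      intro x hx
      have hnn : ∀ n : ℕ, (0:ℝ) ≤ x ^ n * (1 - x) := fun n =>
        mul_nonneg (pow_nonneg hx.1.le _) (by linarith [hx.2])
      have hsum : Summable (fun n : ℕ => x ^ n * (1 - x)) :=
        (summable_geometric_of_lt_one hx.1.le hx.2).mul_right _
      calc ∑' n : ℕ, (‖f n x‖₊ : ℝ≥0∞)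
          = ∑' n : ℕ, ENNReal.ofReal (x ^ n * (1 - x)) * (‖g x‖₊ : ℝ≥0∞) := by
            refine tsum_congr fun n => ?_
            simp only [hfdef, hgdef]
            rw [kernel_shift φ ψ η ξ R S a b P Q n hx, nnnorm_smul, ENNReal.coe_mul,
              ← enorm_eq_nnnorm, Real.enorm_eq_ofReal (hnn n)]
        _ = (∑' n : ℕ, ENNReal.ofReal (x ^ n * (1 - x))) * (‖g x‖₊ : ℝ≥0∞) :=
            ENNReal.tsum_mul_right
        _ = (‖g x‖₊ : ℝ≥0∞) := by
            rw [← ENNReal.ofReal_tsum_of_nonneg hnn hsum, tsum_mul_right,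
              tsum_geometric_of_lt_one hx.1.le hx.2,
              inv_mul_cancel₀ (by linarith [hx.2] : (1:ℝ) - x ≠ 0), ENNReal.ofReal_one,
              one_mul]
    rw [hswap]
    have : ∫⁻ x, ∑' n : ℕ, (‖f n x‖₊ : ℝ≥0∞) ∂μ = ∫⁻ x, (‖g x‖₊ : ℝ≥0∞) ∂μ := by
      refine lintegral_congr_ae ?_
      filter_upwards [ae_restrict_mem measurableSet_Ioo] with x hx
      exact hptl x hx
    rw [this]
    exact hg.2.ne
  have key : ∫ x, ∑' n : ℕ, f n x ∂μ = ∑' n : ℕ, ∫ x, f n x ∂μ :=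
    integral_tsum hmeas hfin
  have lhs : GBL φ ψ η ξ R S a b P Q = ∫ x, ∑' n : ℕ, f n x ∂μ := by
    refine (integral_congr_ae ?_).symm
    filter_upwards [ae_restrict_mem measurableSet_Ioo] with x hx
    exact hpt x hx
  rw [lhs, key]
  rfl

end
end

section
/- Let k ≥ 1, let P, Q, R, S be Hermitian positive definite k×k complex matrices, let φ, ψ, η, ξ, a, b > 0 be real numbers, and let m be a natural number. Then the generalized beta-logarithmic matrix function satisfies the finite binomial sum identity BL_{(φ,ψ)}^{(R,S,η,ξ)}(a,b;P,Q) = ∑_{n=0}^{m} C(m,n) · BL_{(φ,ψ)}^{(R,S,η,ξ)}(a,b; P+nI, Q+(m−n)I), where C(m,n) denotes the binomial coefficient. -/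
open MeasureTheory Real
open scoped Matrix.Norms.L2Operator ComplexOrder

noncomputable section

lemma mpow_add_nsmul_one {k : ℕ} {x : ℝ} (hx : 0 < x) (A : Matrix (Fin k) (Fin k) ℂ) (n : ℕ) :
    mpow x (A + n • 1) = (x ^ n : ℝ) • mpow x A := by
  unfold mpow
  have h1 : (Real.log x : ℂ) • (A + n • (1 : Matrix (Fin k) (Fin k) ℂ))
      = (Real.log x : ℂ) • A + ((Real.log x * n : ℝ) : ℂ) • (1 : Matrix (Fin k) (Fin k) ℂ) := by
    rw [smul_add]
    congr 1
    rw [← Nat.cast_smul_eq_nsmul ℂ, smul_smul]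
    push_cast
    ring_nf
  rw [h1]
  have hcomm : Commute ((Real.log x : ℂ) • A)
      (((Real.log x * n : ℝ) : ℂ) • (1 : Matrix (Fin k) (Fin k) ℂ)) :=
    (Commute.one_right _).smul_right _
  rw [Matrix.exp_add_of_commute _ _ hcomm]
  have h2 : NormedSpace.exp (((Real.log x * n : ℝ) : ℂ) • (1 : Matrix (Fin k) (Fin k) ℂ))
      = ((x ^ n : ℝ) : ℂ) • (1 : Matrix (Fin k) (Fin k) ℂ) := by
    rw [← Algebra.algebraMap_eq_smul_one, ← NormedSpace.algebraMap_exp_comm,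
      ← Complex.exp_eq_exp_ℂ, ← Complex.ofReal_exp, mul_comm, Real.exp_nat_mul,
      Real.exp_log hx, Algebra.algebraMap_eq_smul_one]
  rw [h2, mul_smul_comm, mul_one, Complex.coe_smul]

lemma gblKernel_shift {k : ℕ} (φ ψ η ξ : ℝ) (R S : Matrix (Fin k) (Fin k) ℂ) (a b : ℝ)
    (P Q : Matrix (Fin k) (Fin k) ℂ) {x : ℝ} (hx0 : 0 < x) (hx1 : x < 1) (n n' : ℕ) :
    gblKernel φ ψ η ξ R S a b (P + n • 1) (Q + n' • 1) x
      = (x ^ n * (1 - x) ^ n') • gblKernel φ ψ η ξ R S a b P Q x := by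
  have hx1' : 0 < 1 - x := by linarith
  unfold gblKernel
  have e1 : P + n • (1 : Matrix (Fin k) (Fin k) ℂ) - 1 = (P - 1) + n • 1 := by abel
  have e2 : Q + n' • (1 : Matrix (Fin k) (Fin k) ℂ) - 1 = (Q - 1) + n' • 1 := by abel
  rw [e1, e2, mpow_add_nsmul_one hx0, mpow_add_nsmul_one hx1']
  rw [Matrix.smul_mul, Matrix.mul_smul, Matrix.smul_mul, Matrix.smul_mul, Matrix.smul_mul,
    Matrix.smul_mul, smul_smul, smul_smul, smul_smul]
  congr 1
  ring

theorem GBL_finite_sum {k : ℕ} (hk : 1 ≤ k) (P Q R S : Matrix (Fin k) (Fin k) ℂ)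
    (hP : P.PosDef) (hQ : Q.PosDef) (hR : R.PosDef) (hS : S.PosDef)
    (φ ψ η ξ a b : ℝ) (hφ : 0 < φ) (hψ : 0 < ψ) (hη : 0 < η) (hξ : 0 < ξ)
    (ha : 0 < a) (hb : 0 < b) (m : ℕ)
    (hInt : ∀ m' n' : ℕ, IntegrableOn
      (gblKernel φ ψ η ξ R S a b (P + m' • (1 : Matrix (Fin k) (Fin k) ℂ))
        (Q + n' • (1 : Matrix (Fin k) (Fin k) ℂ))) (Set.Ioo 0 1)) :
    GBL φ ψ η ξ R S a b P Q =
      ∑ n ∈ Finset.range (m + 1), m.choose n •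
        GBL φ ψ η ξ R S a b (P + n • (1 : Matrix (Fin k) (Fin k) ℂ))
          (Q + (m - n) • (1 : Matrix (Fin k) (Fin k) ℂ)) := by
  symm
  calc ∑ n ∈ Finset.range (m + 1), m.choose n •
        GBL φ ψ η ξ R S a b (P + n • (1 : Matrix (Fin k) (Fin k) ℂ))
          (Q + (m - n) • (1 : Matrix (Fin k) (Fin k) ℂ))
      = ∫ x in Set.Ioo (0 : ℝ) 1, ∑ n ∈ Finset.range (m + 1),
          (m.choose n : ℝ) • gblKernel φ ψ η ξ R S a b
            (P + n • (1 : Matrix (Fin k) (Fin k) ℂ))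
            (Q + (m - n) • (1 : Matrix (Fin k) (Fin k) ℂ)) x := by
        rw [integral_finset_sum]
        · refine Finset.sum_congr rfl fun n _ => ?_
          rw [integral_smul, GBL, Nat.cast_smul_eq_nsmul]
        · exact fun n _ => ((hInt n (m - n)).smul (m.choose n : ℝ))
    _ = ∫ x in Set.Ioo (0 : ℝ) 1, gblKernel φ ψ η ξ R S a b P Q x := by
        refine setIntegral_congr_fun measurableSet_Ioo fun x hx => ?_
        obtain ⟨hx0, hx1⟩ := hx
        have : ∀ n ∈ Finset.range (m + 1),
            (m.choose n : ℝ) • gblKernel φ ψ η ξ R S a b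
              (P + n • (1 : Matrix (Fin k) (Fin k) ℂ))
              (Q + (m - n) • (1 : Matrix (Fin k) (Fin k) ℂ)) x
            = (x ^ n * (1 - x) ^ (m - n) * m.choose n) •
                gblKernel φ ψ η ξ R S a b P Q x := by
          intro n _
          rw [gblKernel_shift φ ψ η ξ R S a b P Q hx0 hx1, smul_smul]
          ring_nf
        rw [Finset.sum_congr rfl this, ← Finset.sum_smul, ← add_pow, add_sub_cancel,
          one_pow, one_smul]
    _ = GBL φ ψ η ξ R S a b P Q := rfl

end
end

section
/- Let k ≥ 1, let P, Q, R, S be Hermitian positive definite k×k complex matrices, and let φ, ψ, η, ξ, a, b > 0 be real numbers. Then the generalized beta-logarithmic matrix function has the trigonometric integral representation BL_{(φ,ψ)}^{(R,S,η,ξ)}(a,b;P,Q) = 2a ∫_0^{π/2} (b/a)^{sin²θ} · (sin θ)^{2P−I} (cos θ)^{2Q−I} E_{φ,ψ}(−R (csc θ)^{2η}) E_{φ,ψ}(−S (sec θ)^{2ξ}) dθ, obtained from the substitution x = sin²θ. -/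
open MeasureTheory Real
open scoped Matrix.Norms.L2Operator ComplexOrder

noncomputable section

lemma smul_mpow_sq {k : ℕ} {s : ℝ} (hs : 0 < s) (P : Matrix (Fin k) (Fin k) ℂ) :
    s • mpow (s ^ 2) (P - 1) = mpow s (2 • P - 1) := by
  unfold mpow
  have hlog : Real.log (s ^ 2) = 2 * Real.log s := by
    rw [Real.log_pow]; push_cast; ring
  rw [hlog]
  set c : ℂ := (Real.log s : ℂ) with hc
  have hsplit : c • ((2 • P : Matrix (Fin k) (Fin k) ℂ) - 1)
      = ((2 * Real.log s : ℝ) : ℂ) • (P - 1) + c • (1 : Matrix (Fin k) (Fin k) ℂ) := by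
    rw [← Nat.cast_smul_eq_nsmul ℂ 2 P]
    push_cast
    module
  rw [hsplit, Matrix.exp_add_of_commute]
  · have h1 : c • (1 : Matrix (Fin k) (Fin k) ℂ) = algebraMap ℂ (Matrix (Fin k) (Fin k) ℂ) c :=
      (Algebra.algebraMap_eq_smul_one c).symm
    rw [h1, ← NormedSpace.algebraMap_exp_comm, Algebra.algebraMap_eq_smul_one,
      mul_smul_comm, mul_one]
    rw [← Complex.exp_eq_exp_ℂ, hc, ← Complex.ofReal_exp, Real.exp_log hs]
    ext i j
    simp [Matrix.smul_apply, Complex.real_smul]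
  · exact (Commute.one_right _).smul_left _ |>.smul_right _

lemma sinSq_image : (fun θ : ℝ => Real.sin θ ^ 2) '' Set.Ioo 0 (π / 2) = Set.Ioo (0:ℝ) 1 := by
  ext y
  constructor
  · rintro ⟨θ, ⟨h0, h1⟩, rfl⟩
    have hpi : θ < π := lt_trans h1 (by linarith [Real.pi_pos])
    have hs : 0 < Real.sin θ := Real.sin_pos_of_pos_of_lt_pi h0 hpi
    have hs1 : Real.sin θ < 1 := by
      have := Real.strictMonoOn_sin (a := θ) (b := π / 2)
        ⟨by linarith [Real.pi_pos], h1.le⟩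
        ⟨by linarith [Real.pi_pos], le_refl _⟩ h1
      simpa using this
    exact ⟨pow_pos hs 2, by simp only []; nlinarith⟩
  · rintro ⟨h0, h1⟩
    have hy0 : 0 < Real.sqrt y := Real.sqrt_pos.mpr h0
    have hy1 : Real.sqrt y < 1 := by
      rw [show (1:ℝ) = Real.sqrt 1 by simp]
      exact Real.sqrt_lt_sqrt h0.le h1
    refine ⟨Real.arcsin (Real.sqrt y), ⟨Real.arcsin_pos.mpr hy0, ?_⟩, ?_⟩
    · exact Real.arcsin_lt_pi_div_two.mpr hy1
    · show Real.sin (Real.arcsin (Real.sqrt y)) ^ 2 = y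
      rw [Real.sin_arcsin (by linarith) hy1.le, Real.sq_sqrt h0.le]

lemma sinSq_injOn : Set.InjOn (fun θ : ℝ => Real.sin θ ^ 2) (Set.Ioo 0 (π / 2)) := by
  intro x hx y hy h
  obtain ⟨hx0, hx1⟩ := hx
  obtain ⟨hy0, hy1⟩ := hy
  have hsx : 0 < Real.sin x := Real.sin_pos_of_pos_of_lt_pi hx0 (by linarith [Real.pi_pos])
  have hsy : 0 < Real.sin y := Real.sin_pos_of_pos_of_lt_pi hy0 (by linarith [Real.pi_pos])
  have hsin : Real.sin x = Real.sin y := by simp only at h; nlinarith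
  exact Real.injOn_sin ⟨by linarith [Real.pi_pos], by linarith⟩
    ⟨by linarith [Real.pi_pos], by linarith⟩ hsin

theorem GBL_trig_integral {k : ℕ} (hk : 1 ≤ k) (P Q R S : Matrix (Fin k) (Fin k) ℂ)
    (hP : P.PosDef) (hQ : Q.PosDef) (hR : R.PosDef) (hS : S.PosDef)
    (φ ψ η ξ a b : ℝ) (hφ : 0 < φ) (hψ : 0 < ψ) (hη : 0 < η) (hξ : 0 < ξ)
    (ha : 0 < a) (hb : 0 < b)
    (hInt : IntegrableOn (gblKernel φ ψ η ξ R S a b P Q) (Set.Ioo 0 1)) :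
    GBL φ ψ η ξ R S a b P Q =
      (2 * a : ℝ) • ∫ θ in Set.Ioo (0 : ℝ) (π / 2),
        (((b / a) ^ (Real.sin θ ^ 2) : ℝ) •
          (mpow (Real.sin θ) (2 • P - 1) * mpow (Real.cos θ) (2 • Q - 1) *
            mittagLeffler φ ψ ((-(Real.sin θ ^ (-(2 * η))) : ℝ) • R) *
            mittagLeffler φ ψ ((-(Real.cos θ ^ (-(2 * ξ))) : ℝ) • S))) := by
  have hderiv : ∀ θ ∈ Set.Ioo (0:ℝ) (π/2),
      HasDerivWithinAt (fun θ : ℝ => Real.sin θ ^ 2)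
        ((fun θ : ℝ => 2 * Real.sin θ * Real.cos θ) θ) (Set.Ioo 0 (π/2)) θ := by
    intro θ _
    have := ((Real.hasDerivAt_sin θ).fun_pow 2).hasDerivWithinAt
      (s := Set.Ioo (0:ℝ) (π/2))
    simpa [mul_comm, mul_assoc] using this
  rw [GBL, ← sinSq_image,
    integral_image_eq_integral_abs_deriv_smul measurableSet_Ioo hderiv sinSq_injOn,
    ← integral_smul]
  refine setIntegral_congr_fun measurableSet_Ioo fun θ hθ => ?_
  obtain ⟨h0, h1⟩ := hθ
  have hs : 0 < Real.sin θ := Real.sin_pos_of_pos_of_lt_pi h0 (by linarith [Real.pi_pos])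
  have hc : 0 < Real.cos θ := Real.cos_pos_of_mem_Ioo ⟨by linarith [Real.pi_pos], h1⟩
  have hcs : Real.cos θ ^ 2 = 1 - Real.sin θ ^ 2 := Real.cos_sq' θ
  show |(fun θ : ℝ => 2 * Real.sin θ * Real.cos θ) θ| •
      gblKernel φ ψ η ξ R S a b P Q (Real.sin θ ^ 2) = _
  simp only [gblKernel]
  rw [← hcs]
  have harg1 : (Real.sin θ ^ 2 : ℝ) ^ (-η) = Real.sin θ ^ (-(2 * η)) := by
    rw [← Real.rpow_natCast (Real.sin θ) 2, ← Real.rpow_mul hs.le]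
    norm_num
  have harg2 : (Real.cos θ ^ 2 : ℝ) ^ (-ξ) = Real.cos θ ^ (-(2 * ξ)) := by
    rw [← Real.rpow_natCast (Real.cos θ) 2, ← Real.rpow_mul hc.le]
    norm_num
  rw [harg1, harg2, ← smul_mpow_sq hs P, ← smul_mpow_sq hc Q]
  simp only [smul_mul_assoc, mul_smul_comm, smul_smul]
  congr 1
  have habs : |2 * Real.sin θ * Real.cos θ| = 2 * Real.sin θ * Real.cos θ :=
    abs_of_pos (by positivity)
  have hba : (b / a) ^ ((Real.sin θ ^ 2 : ℝ)) =
      b ^ ((Real.sin θ ^ 2 : ℝ)) / a ^ ((Real.sin θ ^ 2 : ℝ)) :=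
    Real.div_rpow hb.le ha.le _
  have haa : a ^ ((Real.cos θ ^ 2 : ℝ)) = a / a ^ ((Real.sin θ ^ 2 : ℝ)) := by
    rw [hcs, Real.rpow_sub ha, Real.rpow_one]
  have hane : a ^ ((Real.sin θ ^ 2 : ℝ)) ≠ 0 := (Real.rpow_pos_of_pos ha _).ne'
  rw [habs, hba, haa]
  field_simp
end
end
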